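/- arXiv:1907.10369 — 2 statements merged into one kernel-verified Lean document; each statement's English description precedes it below -/
import Mathlib

section
/- Let Q be a Borel probability measure on ℝ^ℕ that is stationary under the shift map T((x₁,x₂,…)) = (x₂,x₃,…), let Y be a real-valued random variable on (ℝ^ℕ, B(ℝ^ℕ), Q) and λ ∈ (0,1). If Q_λ is a version of the conditional λth quantile π_λ(Y | I_Q) of Y with respect to the σ-field I_Q of almost shift-invariant sets, then there exists a random variable R_λ which is a version of the conditional λth quantile π_λ(Y | Ĩ) of Y with respect to the σ-field Ĩ of strictly shift-invariant Borel sets, and which satisfies Q_λ = R_λ Q-almost surely. -/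
open MeasureTheory Filter Set

noncomputable section

/-- The shift map `T((x₁,x₂,…)) = (x₂,x₃,…)` on `ℝ^ℕ`. -/
def shift (x : ℕ → ℝ) : ℕ → ℝ := fun n => x (n + 1)

/-- The σ-field `Ĩ` of strictly shift-invariant Borel subsets of `ℝ^ℕ`. -/
def invSigma : MeasurableSpace (ℕ → ℝ) where
  MeasurableSet' B := MeasurableSet B ∧ shift ⁻¹' B = B
  measurableSet_empty := ⟨MeasurableSet.empty, Set.preimage_empty⟩
  measurableSet_compl B hB := ⟨hB.1.compl, by rw [Set.preimage_compl, hB.2]⟩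
  measurableSet_iUnion f hf :=
    ⟨MeasurableSet.iUnion fun i => (hf i).1, by
      rw [Set.preimage_iUnion]
      exact Set.iUnion_congr fun i => (hf i).2⟩

/-- The σ-field `I_Q` of almost shift-invariant Borel subsets of `ℝ^ℕ`,
for a (stationary) probability measure `Q`. -/
def aeInvSigma (Q : Measure (ℕ → ℝ)) : MeasurableSpace (ℕ → ℝ) where
  MeasurableSet' B := MeasurableSet B ∧ Q ((B \ shift ⁻¹' B) ∪ (shift ⁻¹' B \ B)) = 0
  measurableSet_empty := ⟨MeasurableSet.empty, by simp⟩
  measurableSet_compl B hB := ⟨hB.1.compl, by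
    rw [Set.preimage_compl, compl_sdiff_compl, compl_sdiff_compl, Set.union_comm]
    exact hB.2⟩
  measurableSet_iUnion f hf := by
    refine ⟨MeasurableSet.iUnion fun i => (hf i).1, ?_⟩
    refine measure_mono_null ?_ (measure_iUnion_null fun i => (hf i).2)
    intro x hx
    simp only [Set.mem_union, Set.mem_diff, Set.mem_iUnion, Set.mem_preimage] at hx ⊢
    rcases hx with ⟨⟨i, hxi⟩, hnx⟩ | ⟨⟨i, hxi⟩, hnx⟩
    · exact ⟨i, Or.inl ⟨hxi, fun h => hnx ⟨i, h⟩⟩⟩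
    · exact ⟨i, Or.inr ⟨hxi, fun h => hnx ⟨i, h⟩⟩⟩

/-- A sequence `X = (X₁, X₂, …)` (indexed here from 0) of real-valued random variables is
strictly stationary: each `Xₙ` is measurable and `(X₁,X₂,…)` and `(X₂,X₃,…)` have the same
distribution as `ℝ^ℕ`-valued random elements. -/
def IsStrictStationary {Ω : Type*} [MeasurableSpace Ω] (P : Measure Ω) (X : ℕ → Ω → ℝ) : Prop :=
  (∀ n, Measurable (X n)) ∧
    Measure.map (fun ω => fun n => X (n + 1) ω) P = Measure.map (fun ω => fun n => X n ω) P

/-- The σ-field `I^X` of sets invariant with respect to the sequence `X`. -/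
def seqInvSigma {Ω : Type*} [MeasurableSpace Ω] (X : ℕ → Ω → ℝ) : MeasurableSpace Ω where
  MeasurableSet' A := ∃ B : Set (ℕ → ℝ), MeasurableSet B ∧
    ∀ i : ℕ, A = (fun ω => fun n => X (n + i) ω) ⁻¹' B
  measurableSet_empty := ⟨∅, MeasurableSet.empty, fun i => rfl⟩
  measurableSet_compl A hA := by
    obtain ⟨B, hB, hAB⟩ := hA
    exact ⟨Bᶜ, hB.compl, fun i => by rw [Set.preimage_compl, ← hAB i]⟩
  measurableSet_iUnion f hf := by
    choose B hB hAB using hf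
    refine ⟨⋃ i, B i, MeasurableSet.iUnion hB, fun j => ?_⟩
    rw [Set.preimage_iUnion]
    exact Set.iUnion_congr fun i => hAB i j

/-- Conditional probability of the event `s` given the σ-field `G`, defined as the conditional
expectation of the indicator of `s`. -/
def condProb {α : Type*} [mα : MeasurableSpace α] (μ : Measure α) (G : MeasurableSpace α)
    (s : Set α) : α → ℝ :=
  @MeasureTheory.condExp α ℝ G mα _ _ μ (s.indicator fun _ => (1 : ℝ))

/-- `q` is a (version of the) conditional `l`-th quantile of `Z` with respect to the
sub-σ-field `G`: `q` is `G`-measurable, `P(Z ≥ q | G) ≥ 1 - l` a.s. and `P(Z ≤ q | G) ≥ l` a.s. -/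
def IsCondQuantile {α : Type*} [mα : MeasurableSpace α] (μ : Measure α) (G : MeasurableSpace α)
    (Z q : α → ℝ) (l : ℝ) : Prop :=
  Measurable[G] q ∧
    (∀ᵐ x ∂μ, 1 - l ≤ @condProb α mα μ G {y | q y ≤ Z y} x) ∧
    (∀ᵐ x ∂μ, l ≤ @condProb α mα μ G {y | Z y ≤ q y} x)

/-- The conditional `l`-th quantile of `Z` given `G` is unique: any two versions agree a.s. -/
def CondQuantileUnique {α : Type*} [mα : MeasurableSpace α] (μ : Measure α) (G : MeasurableSpace α)
    (Z : α → ℝ) (l : ℝ) : Prop :=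
  ∀ q₁ q₂, @IsCondQuantile α mα μ G Z q₁ l → @IsCondQuantile α mα μ G Z q₂ l → q₁ =ᵐ[μ] q₂

/-- The `k`-th order statistic (k-th smallest value, `1 ≤ k ≤ n`) of the sample
`z 0, …, z (n-1)`. -/
def orderStat (k n : ℕ) (z : ℕ → ℝ) : ℝ :=
  (((List.ofFn fun i : Fin n => z i).insertionSort (· ≤ ·)).getD (k - 1) 0)

end

section Aux

open Filter

lemma shift_measurable : Measurable shift :=
  measurable_pi_lambda _ fun n => measurable_pi_apply (n + 1)

lemma invSigma_le : invSigma ≤ (inferInstance : MeasurableSpace (ℕ → ℝ)) :=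
  fun _ hs => hs.1

lemma aeInvSigma_le (Q : Measure (ℕ → ℝ)) :
    aeInvSigma Q ≤ (inferInstance : MeasurableSpace (ℕ → ℝ)) :=
  fun _ hs => hs.1

lemma invSigma_le_aeInvSigma (Q : Measure (ℕ → ℝ)) : invSigma ≤ aeInvSigma Q := by
  intro s hs
  refine ⟨hs.1, ?_⟩
  rw [hs.2]
  simp

/-- An almost invariant set is a.e. equal to its preimage under any iterate of the shift. -/
lemma aeInv_iterate_ae_eq (Q : Measure (ℕ → ℝ)) (hQ : Measure.map shift Q = Q)
    {B : Set (ℕ → ℝ)} (hB : MeasurableSet[aeInvSigma Q] B) (k : ℕ) :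
    shift^[k] ⁻¹' B =ᵐ[Q] B := by
  have hmp : MeasureTheory.MeasurePreserving shift Q Q := ⟨shift_measurable, hQ⟩
  have h1 : shift ⁻¹' B =ᵐ[Q] B := by
    rw [MeasureTheory.ae_eq_set]
    constructor
    · exact measure_mono_null Set.subset_union_right hB.2
    · exact measure_mono_null (Set.subset_union_of_subset_left subset_rfl _) hB.2
  exact hmp.quasiMeasurePreserving.preimage_iterate_ae_eq k h1

/-- Every almost invariant set is a.e. equal to a strictly invariant Borel set. -/
lemma exists_invSigma_ae_eq (Q : Measure (ℕ → ℝ)) (hQ : Measure.map shift Q = Q)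
    {B : Set (ℕ → ℝ)} (hB : MeasurableSet[aeInvSigma Q] B) :
    ∃ B' : Set (ℕ → ℝ), MeasurableSet[invSigma] B' ∧ B =ᵐ[Q] B' := by
  refine ⟨⋂ n, ⋃ k, shift^[n + k] ⁻¹' B, ⟨?_, ?_⟩, ?_⟩
  · exact MeasurableSet.iInter fun n => MeasurableSet.iUnion fun k =>
      (shift_measurable.iterate _) hB.1
  · ext x
    simp only [Set.mem_preimage, Set.mem_iInter, Set.mem_iUnion]
    constructor
    · intro h n
      obtain ⟨k, hk⟩ := h n
      refine ⟨k + 1, ?_⟩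
      have he : shift^[n + (k + 1)] x = shift^[n + k] (shift x) := by
        rw [show n + (k + 1) = (n + k) + 1 by ring, Function.iterate_succ_apply]
      rwa [he]
    · intro h n
      obtain ⟨k, hk⟩ := h (n + 1)
      refine ⟨k, ?_⟩
      have he : shift^[n + k] (shift x) = shift^[n + 1 + k] x := by
        rw [show n + 1 + k = (n + k) + 1 by ring, Function.iterate_succ_apply]
      rwa [he]
  · have hall : ∀ᵐ x ∂Q, ∀ j : ℕ, x ∈ shift^[j] ⁻¹' B ↔ x ∈ B := by
      rw [MeasureTheory.ae_all_iff]
      intro j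
      exact Filter.eventuallyEq_set.mp (aeInv_iterate_ae_eq Q hQ hB j)
    rw [Filter.eventuallyEq_set]
    filter_upwards [hall] with x hx
    simp only [Set.mem_iInter, Set.mem_iUnion]
    constructor
    · intro h
      exact fun _ => ⟨0, (hx _).mpr h⟩
    · intro h
      obtain ⟨k, hk⟩ := h 0
      exact (hx _).mp hk

/-- A function measurable w.r.t. the almost invariant σ-field is a.e. shift-invariant. -/
lemma aeInv_comp_shift_ae_eq (Q : Measure (ℕ → ℝ)) (hQ : Measure.map shift Q = Q)
    {f : (ℕ → ℝ) → ℝ} (hf : Measurable[aeInvSigma Q] f) :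
    f ∘ shift =ᵐ[Q] f := by
  have hrat : ∀ᵐ x ∂Q, ∀ r : ℚ, f (shift x) ≤ (r : ℝ) ↔ f x ≤ (r : ℝ) := by
    rw [MeasureTheory.ae_all_iff]
    intro r
    have hB : MeasurableSet[aeInvSigma Q] (f ⁻¹' Set.Iic (r : ℝ)) :=
      hf measurableSet_Iic
    have h1 : shift^[1] ⁻¹' (f ⁻¹' Set.Iic (r : ℝ)) =ᵐ[Q] f ⁻¹' Set.Iic (r : ℝ) :=
      aeInv_iterate_ae_eq Q hQ hB 1
    have := Filter.eventuallyEq_set.mp h1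
    filter_upwards [this] with x hx
    simpa [Set.mem_preimage, Set.mem_Iic] using hx
  filter_upwards [hrat] with x hx
  by_contra hne
  rcases lt_or_gt_of_ne hne with h | h
  · obtain ⟨r, hr1, hr2⟩ := exists_rat_btwn h
    exact absurd ((hx r).mp hr1.le) (not_le.mpr hr2)
  · obtain ⟨r, hr1, hr2⟩ := exists_rat_btwn h
    exact absurd ((hx r).mpr hr1.le) (not_le.mpr hr2)

/-- Conditional expectations w.r.t. `invSigma` and `aeInvSigma Q` agree a.e. -/
lemma condexp_invSigma_eq_aeInvSigma (Q : Measure (ℕ → ℝ)) [MeasureTheory.IsProbabilityMeasure Q]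
    (hQ : Measure.map shift Q = Q) {f : (ℕ → ℝ) → ℝ} (hf : MeasureTheory.Integrable f Q) :
    (MeasureTheory.condExp invSigma Q f) =ᵐ[Q] MeasureTheory.condExp (aeInvSigma Q) Q f := by
  have hm : aeInvSigma Q ≤ (inferInstance : MeasurableSpace (ℕ → ℝ)) := aeInvSigma_le Q
  have hm' : invSigma ≤ (inferInstance : MeasurableSpace (ℕ → ℝ)) := invSigma_le
  refine MeasureTheory.ae_eq_condExp_of_forall_setIntegral_eq hm hf
    (fun s _ _ => MeasureTheory.integrable_condExp.integrableOn) (fun s hs _ => ?_) ?_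
  · obtain ⟨s', hs', hss'⟩ := exists_invSigma_ae_eq Q hQ hs
    rw [MeasureTheory.setIntegral_congr_set hss',
      MeasureTheory.setIntegral_condExp hm' hf hs',
      ← MeasureTheory.setIntegral_congr_set hss']
  · exact MeasureTheory.StronglyMeasurable.aestronglyMeasurable
      (MeasureTheory.stronglyMeasurable_condExp.mono (invSigma_le_aeInvSigma Q))

end Aux

/-- If `q` is a version of the conditional `λ`-th quantile of `Y` with respect
to `I_Q`, then there exists a version `R` of the conditional `λ`-th quantile of `Y` with respect
to `Ĩ` such that `q = R` `Q`-almost surely. -/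
theorem exists_isCondQuantile_invSigma_of_isCondQuantile_aeInvSigma
    (Q : Measure (ℕ → ℝ)) [IsProbabilityMeasure Q]
    (hQ : Measure.map shift Q = Q)
    (Y : (ℕ → ℝ) → ℝ) (hY : Measurable Y)
    (l : ℝ) (hl : l ∈ Set.Ioo (0 : ℝ) 1)
    (q : (ℕ → ℝ) → ℝ) (hq : IsCondQuantile Q (aeInvSigma Q) Y q l) :
    ∃ R : (ℕ → ℝ) → ℝ, IsCondQuantile Q invSigma Y R l ∧ q =ᵐ[Q] R := by
  obtain ⟨hqm, hq1, hq2⟩ := hq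
  have hqq : Measurable q := hqm.mono (aeInvSigma_le Q) le_rfl
  have hmp : MeasurePreserving shift Q Q := ⟨shift_measurable, hQ⟩
  have hshift : q ∘ shift =ᵐ[Q] q := aeInv_comp_shift_ae_eq Q hQ hqm
  have hiter : ∀ n : ℕ, q ∘ shift^[n] =ᵐ[Q] q := by
    intro n
    induction n with
    | zero =>
      simp only [Function.iterate_zero, Function.comp_id]
      exact Filter.EventuallyEq.rfl
    | succ n ih =>
      have h1 : q ∘ shift^[n + 1] = (q ∘ shift^[n]) ∘ shift := by
        ext x
        simp [Function.iterate_succ_apply]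
      rw [h1]
      exact (hmp.quasiMeasurePreserving.ae_eq_comp ih).trans hshift
  set R : (ℕ → ℝ) → ℝ := fun x => Filter.limsup (fun n => q (shift^[n] x)) Filter.atTop
    with hRdef
  have hRmeas : Measurable R :=
    Measurable.limsup fun n => hqq.comp (shift_measurable.iterate n)
  have hRshift : ∀ x, R (shift x) = R x := by
    intro x
    have h1 : (fun n => q (shift^[n] (shift x))) = fun n => q (shift^[n + 1] x) := by
      ext n
      rw [Function.iterate_succ_apply]
    simp only [hRdef]
    rw [h1, Filter.limsup_nat_add (fun n => q (shift^[n] x)) 1]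
  have hqR : q =ᵐ[Q] R := by
    have hall : ∀ᵐ x ∂Q, ∀ n : ℕ, q (shift^[n] x) = q x := by
      rw [ae_all_iff]
      exact fun n => hiter n
    filter_upwards [hall] with x hx
    have h1 : (fun n => q (shift^[n] x)) = fun _ => q x := funext hx
    simp only [hRdef]
    rw [h1, Filter.limsup_const]
  have hRinv : Measurable[invSigma] R := by
    intro s hs
    refine ⟨hRmeas hs, ?_⟩
    ext x
    simp only [Set.mem_preimage, hRshift x]
  -- the two conditional probabilities agree a.e.
  have hkey : ∀ Z W : (ℕ → ℝ) → ℝ, Measurable Z → Measurable W → Z =ᵐ[Q] W →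
      condProb Q invSigma {y | Z y ≤ Y y} =ᵐ[Q] condProb Q (aeInvSigma Q) {y | W y ≤ Y y} := by
    intro Z W hZ hW hZW
    have hsZ : MeasurableSet {y | Z y ≤ Y y} := measurableSet_le hZ hY
    have hint : Integrable (({y | Z y ≤ Y y}).indicator fun _ => (1 : ℝ)) Q :=
      (integrable_const (1 : ℝ)).indicator hsZ
    have hind : ({y | Z y ≤ Y y}).indicator (fun _ => (1 : ℝ)) =ᵐ[Q]
        ({y | W y ≤ Y y}).indicator (fun _ => (1 : ℝ)) := by
      filter_upwards [hZW] with x hx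
      simp only [Set.indicator_apply, Set.mem_setOf_eq, hx]
    exact (condexp_invSigma_eq_aeInvSigma Q hQ hint).trans (condExp_congr_ae hind)
  have hkey' : ∀ Z W : (ℕ → ℝ) → ℝ, Measurable Z → Measurable W → Z =ᵐ[Q] W →
      condProb Q invSigma {y | Y y ≤ Z y} =ᵐ[Q] condProb Q (aeInvSigma Q) {y | Y y ≤ W y} := by
    intro Z W hZ hW hZW
    have hsZ : MeasurableSet {y | Y y ≤ Z y} := measurableSet_le hY hZ
    have hint : Integrable (({y | Y y ≤ Z y}).indicator fun _ => (1 : ℝ)) Q :=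
      (integrable_const (1 : ℝ)).indicator hsZ
    have hind : ({y | Y y ≤ Z y}).indicator (fun _ => (1 : ℝ)) =ᵐ[Q]
        ({y | Y y ≤ W y}).indicator (fun _ => (1 : ℝ)) := by
      filter_upwards [hZW] with x hx
      simp only [Set.indicator_apply, Set.mem_setOf_eq, hx]
    exact (condexp_invSigma_eq_aeInvSigma Q hQ hint).trans (condExp_congr_ae hind)
  refine ⟨R, ⟨hRinv, ?_, ?_⟩, hqR⟩
  · have h1 := hkey R q hRmeas hqq hqR.symm
    filter_upwards [hq1, h1] with x hx1 hx2
    rw [hx2]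
    exact hx1
  · have h1 := hkey' R q hRmeas hqq hqR.symm
    filter_upwards [hq2, h1] with x hx1 hx2
    rw [hx2]
    exact hx1
end

section
/- Let X be a real-valued random variable on a probability space (Ω, F, P), let G ⊆ F be a sub-σ-field, and let λ ∈ (0,1). Then there exists at least one conditional λth quantile of X with respect to G, i.e. a random variable Q_λ such that Q_λ is G-measurable and P(X ≥ Q_λ | G) ≥ 1−λ and P(X ≤ Q_λ | G) ≥ λ almost surely. -/
open MeasureTheory Filter Set

open Topology in
section
noncomputable section CondQuantileAux

/-- Quantile of a measure on ℝ. -/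
def mqSet (μ : Measure ℝ) (l : ℝ) : Set ℝ := {x | ENNReal.ofReal l ≤ μ (Iic x)}

def mq (μ : Measure ℝ) (l : ℝ) : ℝ := sInf (mqSet μ l)

lemma mqSet_nonempty (μ : Measure ℝ) [IsProbabilityMeasure μ] {l : ℝ} (hl0 : 0 < l) (hl1 : l < 1) :
    (mqSet μ l).Nonempty := by
  have h := tendsto_measure_Iic_atTop μ
  rw [measure_univ] at h
  have hlt : ENNReal.ofReal l < 1 := by
    rw [← ENNReal.ofReal_one]
    exact ENNReal.ofReal_lt_ofReal_iff_of_nonneg (by linarith) |>.mpr hl1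
  obtain ⟨x, hx⟩ := (h.eventually (eventually_ge_nhds hlt)).exists
  exact ⟨x, hx⟩

lemma mqSet_bddBelow (μ : Measure ℝ) [IsProbabilityMeasure μ] {l : ℝ} (hl0 : 0 < l) :
    BddBelow (mqSet μ l) := by
  have h : Tendsto (fun n : ℤ => μ (Iic (n : ℝ))) atBot (𝓝 (μ (⋂ n : ℤ, Iic (n : ℝ)))) :=
    tendsto_measure_iInter_atBot (fun n => (measurableSet_Iic).nullMeasurableSet)
      (fun a b hab => Iic_subset_Iic.2 (by exact_mod_cast hab)) ⟨0, measure_ne_top _ _⟩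
  have hempty : (⋂ n : ℤ, Iic ((n : ℤ) : ℝ)) = ∅ := by
    ext x
    simp only [mem_iInter, mem_Iic, mem_empty_iff_false, iff_false, not_forall, not_le]
    obtain ⟨n, hn⟩ := exists_int_lt x
    exact ⟨n, hn⟩
  rw [hempty, measure_empty] at h
  have hpos : (0 : ENNReal) < ENNReal.ofReal l := ENNReal.ofReal_pos.2 hl0
  obtain ⟨n, hn⟩ := (h.eventually (eventually_lt_nhds hpos)).exists
  refine ⟨(n : ℝ), fun y hy => ?_⟩
  by_contra hlt
  push_neg at hlt
  exact absurd (le_trans hy (measure_mono (Iic_subset_Iic.2 hlt.le))) (not_le.2 hn)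

lemma mqSet_upward {μ : Measure ℝ} {l x y : ℝ} (hx : x ∈ mqSet μ l) (hxy : x ≤ y) :
    y ∈ mqSet μ l :=
  le_trans hx (measure_mono (Iic_subset_Iic.2 hxy))

lemma ofReal_le_measure_Iic_mq (μ : Measure ℝ) [IsProbabilityMeasure μ] {l : ℝ}
    (hl0 : 0 < l) (hl1 : l < 1) : ENNReal.ofReal l ≤ μ (Iic (mq μ l)) := by
  have hne := mqSet_nonempty μ hl0 hl1
  have hbdd := mqSet_bddBelow μ hl0
  have h : Tendsto (fun n : ℕ => μ (Iic (mq μ l + ((n : ℝ) + 1)⁻¹)))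
      atTop (𝓝 (μ (⋂ n : ℕ, Iic (mq μ l + ((n : ℝ) + 1)⁻¹)))) :=
    tendsto_measure_iInter_atTop (fun n => (measurableSet_Iic).nullMeasurableSet)
      (fun a b hab => Iic_subset_Iic.2 (by
        have : ((b : ℝ) + 1)⁻¹ ≤ ((a : ℝ) + 1)⁻¹ := by
          apply inv_anti₀ (by positivity) (by exact_mod_cast add_le_add_left (Nat.cast_le.2 hab) 1)
        linarith)) ⟨0, measure_ne_top _ _⟩
  have hiInter : (⋂ n : ℕ, Iic (mq μ l + ((n : ℝ) + 1)⁻¹)) = Iic (mq μ l) := by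
    ext x
    simp only [mem_iInter, mem_Iic]
    constructor
    · intro hx
      by_contra hgt
      push_neg at hgt
      obtain ⟨n, hn⟩ := exists_nat_one_div_lt (sub_pos.2 hgt)
      rw [one_div] at hn
      have := hx n
      linarith
    · intro hx n
      have : (0:ℝ) < ((n : ℝ) + 1)⁻¹ := by positivity
      linarith
  rw [hiInter] at h
  refine ge_of_tendsto' h fun n => ?_
  have hlt : mq μ l < mq μ l + ((n : ℝ) + 1)⁻¹ := by
    have : (0:ℝ) < ((n : ℝ) + 1)⁻¹ := by positivity
    linarith
  obtain ⟨y, hy, hy'⟩ := (csInf_lt_iff hbdd hne).1 hlt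
  exact le_trans hy (measure_mono (Iic_subset_Iic.2 hy'.le))

lemma measure_Iio_mq_le (μ : Measure ℝ) [IsProbabilityMeasure μ] {l : ℝ}
    (hl0 : 0 < l) (hl1 : l < 1) : μ (Iio (mq μ l)) ≤ ENNReal.ofReal l := by
  have hbdd := mqSet_bddBelow μ hl0
  have h : Tendsto (fun n : ℕ => μ (Iic (mq μ l - ((n : ℝ) + 1)⁻¹)))
      atTop (𝓝 (μ (⋃ n : ℕ, Iic (mq μ l - ((n : ℝ) + 1)⁻¹)))) :=
    tendsto_measure_iUnion_atTop (fun a b hab => Iic_subset_Iic.2 (by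
        have : ((b : ℝ) + 1)⁻¹ ≤ ((a : ℝ) + 1)⁻¹ := by
          apply inv_anti₀ (by positivity) (by exact_mod_cast add_le_add_left (Nat.cast_le.2 hab) 1)
        linarith))
  have hiUnion : (⋃ n : ℕ, Iic (mq μ l - ((n : ℝ) + 1)⁻¹)) = Iio (mq μ l) := by
    ext x
    simp only [mem_iUnion, mem_Iic, mem_Iio]
    constructor
    · rintro ⟨n, hn⟩
      have : (0:ℝ) < ((n : ℝ) + 1)⁻¹ := by positivity
      linarith
    · intro hx
      obtain ⟨n, hn⟩ := exists_nat_one_div_lt (sub_pos.2 hx)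
      rw [one_div] at hn
      exact ⟨n, by linarith⟩
  rw [hiUnion] at h
  refine le_of_tendsto' h fun n => ?_
  have hnot : mq μ l - ((n : ℝ) + 1)⁻¹ ∉ mqSet μ l := by
    intro hmem
    have := csInf_le hbdd hmem
    have hpos : (0:ℝ) < ((n : ℝ) + 1)⁻¹ := by positivity
    unfold mq at this
    linarith
  exact le_of_not_ge hnot

lemma ofReal_le_measure_Ici_mq (μ : Measure ℝ) [IsProbabilityMeasure μ] {l : ℝ}
    (hl0 : 0 < l) (hl1 : l < 1) : ENNReal.ofReal (1 - l) ≤ μ (Ici (mq μ l)) := by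
  have h1 : μ (Ici (mq μ l)) = 1 - μ (Iio (mq μ l)) := by
    rw [← compl_Iio, prob_compl_eq_one_sub measurableSet_Iio]
  rw [h1]
  calc ENNReal.ofReal (1 - l) = 1 - ENNReal.ofReal l := by
        rw [ENNReal.ofReal_sub 1 hl0.le, ENNReal.ofReal_one]
    _ ≤ 1 - μ (Iio (mq μ l)) := tsub_le_tsub_left (measure_Iio_mq_le μ hl0 hl1) 1

/-- real versions -/
lemma le_toReal_measure_Iic_mq (μ : Measure ℝ) [IsProbabilityMeasure μ] {l : ℝ}
    (hl0 : 0 < l) (hl1 : l < 1) : l ≤ (μ (Iic (mq μ l))).toReal :=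
  (ENNReal.ofReal_le_iff_le_toReal (measure_ne_top _ _)).1 (ofReal_le_measure_Iic_mq μ hl0 hl1)

lemma le_toReal_measure_Ici_mq (μ : Measure ℝ) [IsProbabilityMeasure μ] {l : ℝ}
    (hl0 : 0 < l) (hl1 : l < 1) : 1 - l ≤ (μ (Ici (mq μ l))).toReal :=
  (ENNReal.ofReal_le_iff_le_toReal (measure_ne_top _ _)).1 (ofReal_le_measure_Ici_mq μ hl0 hl1)

end CondQuantileAux

open ProbabilityTheory in
theorem exists_quantile_aux {α β : Type*} [mα : MeasurableSpace α] [mβ : MeasurableSpace β]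
    (μ : Measure α) [IsProbabilityMeasure μ] (Z : α → ℝ) (hZ : Measurable Z)
    (X : α → β) (hX : Measurable X) {l : ℝ} (hl0 : 0 < l) (hl1 : l < 1) :
    ∃ q : α → ℝ, Measurable[mβ.comap X] q ∧
      (∀ᵐ a ∂μ, 1 - l ≤ (μ[({y | q y ≤ Z y}).indicator (fun _ => (1:ℝ)) | mβ.comap X]) a) ∧
      (∀ᵐ a ∂μ, l ≤ (μ[({y | Z y ≤ q y}).indicator (fun _ => (1:ℝ)) | mβ.comap X]) a) := by
  set κ := condDistrib Z X μ with hκ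
  have hκprob : ∀ b, IsProbabilityMeasure (κ b) := fun b => inferInstance
  set g : β → ℝ := fun b => mq (κ b) l with hgdef
  have hg : Measurable g := by
    apply measurable_of_Iio
    intro c
    have hset : g ⁻¹' Iio c =
        ⋃ r : {r : ℚ // (r : ℝ) < c}, {b | ENNReal.ofReal l ≤ κ b (Iic ((r : ℚ) : ℝ))} := by
      ext b
      simp only [mem_preimage, mem_Iio, mem_iUnion, mem_setOf_eq]
      constructor
      · intro hb
        obtain ⟨x, hx, hxc⟩ := (csInf_lt_iff (mqSet_bddBelow (κ b) hl0)
          (mqSet_nonempty (κ b) hl0 hl1)).1 hb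
        obtain ⟨r, hxr, hrc⟩ := exists_rat_btwn hxc
        exact ⟨⟨r, hrc⟩, mqSet_upward hx hxr.le⟩
      · rintro ⟨⟨r, hrc⟩, hr⟩
        exact lt_of_le_of_lt (csInf_le (mqSet_bddBelow (κ b) hl0) hr) hrc
    rw [hset]
    exact MeasurableSet.iUnion fun r =>
      measurableSet_le measurable_const (Kernel.measurable_coe κ measurableSet_Iic)
  set q : α → ℝ := fun a => g (X a) with hqdef
  have hqG : Measurable[mβ.comap X] q := fun t ht => ⟨g ⁻¹' t, hg ht, rfl⟩
  have hqmα : Measurable q := hg.comp hX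
  refine ⟨q, hqG, ?_, ?_⟩
  · -- P(q ≤ Z | G) ≥ 1 - l
    set s : Set (β × ℝ) := {p | g p.1 ≤ p.2} with hsdef
    have hs : MeasurableSet s := measurableSet_le (hg.comp measurable_fst) measurable_snd
    set f : β × ℝ → ℝ := s.indicator 1 with hfdef
    have hf : StronglyMeasurable f := stronglyMeasurable_const.indicator hs
    have hfZ : (fun a => f (X a, Z a)) = ({y | q y ≤ Z y}).indicator (fun _ => (1:ℝ)) := by
      funext a
      simp only [hfdef, Set.indicator_apply, hsdef, mem_setOf_eq, Pi.one_apply]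
      rfl
    have h_int : Integrable (fun a => f (X a, Z a)) μ := by
      rw [hfZ]
      exact (integrable_const (1:ℝ)).indicator (measurableSet_le hqmα hZ)
    have hcond := condExp_prod_ae_eq_integral_condDistrib hX hZ.aemeasurable hf h_int
    rw [hfZ] at hcond
    have hint_eq : ∀ a, (∫ y, f (X a, y) ∂(condDistrib Z X μ (X a)))
        = (κ (X a) (Ici (q a))).toReal := by
      intro a
      have h1 : (fun y => f (X a, y)) = (Ici (q a)).indicator 1 := by
        funext y
        simp only [hfdef, Set.indicator_apply, hsdef, mem_setOf_eq, mem_Ici, hqdef, Pi.one_apply]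
      rw [h1, integral_indicator_one measurableSet_Ici]
      rfl
    filter_upwards [hcond] with a ha
    rw [ha, hint_eq a]
    exact le_toReal_measure_Ici_mq (κ (X a)) hl0 hl1
  · -- P(Z ≤ q | G) ≥ l
    set s : Set (β × ℝ) := {p | p.2 ≤ g p.1} with hsdef
    have hs : MeasurableSet s := measurableSet_le measurable_snd (hg.comp measurable_fst)
    set f : β × ℝ → ℝ := s.indicator 1 with hfdef
    have hf : StronglyMeasurable f := stronglyMeasurable_const.indicator hs
    have hfZ : (fun a => f (X a, Z a)) = ({y | Z y ≤ q y}).indicator (fun _ => (1:ℝ)) := by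
      funext a
      simp only [hfdef, Set.indicator_apply, hsdef, mem_setOf_eq, Pi.one_apply]
      rfl
    have h_int : Integrable (fun a => f (X a, Z a)) μ := by
      rw [hfZ]
      exact (integrable_const (1:ℝ)).indicator (measurableSet_le hZ hqmα)
    have hcond := condExp_prod_ae_eq_integral_condDistrib hX hZ.aemeasurable hf h_int
    rw [hfZ] at hcond
    have hint_eq : ∀ a, (∫ y, f (X a, y) ∂(condDistrib Z X μ (X a)))
        = (κ (X a) (Iic (q a))).toReal := by
      intro a
      have h1 : (fun y => f (X a, y)) = (Iic (q a)).indicator 1 := by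
        funext y
        simp only [hfdef, Set.indicator_apply, hsdef, mem_setOf_eq, mem_Iic, hqdef, Pi.one_apply]
      rw [h1, integral_indicator_one measurableSet_Iic]
      rfl
    filter_upwards [hcond] with a ha
    rw [ha, hint_eq a]
    exact le_toReal_measure_Iic_mq (κ (X a)) hl0 hl1


end

/-- For every random variable `Z` on a probability space `(Ω, F, P)`, every
sub-σ-field `G ⊆ F` and every `λ ∈ (0,1)`, there exists at least one conditional `λ`-th
quantile of `Z` with respect to `G`. -/
theorem exists_isCondQuantile
    {Ω : Type*} [mΩ : MeasurableSpace Ω] (P : Measure Ω) [IsProbabilityMeasure P]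
    (Z : Ω → ℝ) (hZ : Measurable Z)
    (G : MeasurableSpace Ω) (hG : G ≤ mΩ)
    (l : ℝ) (hl : l ∈ Set.Ioo (0 : ℝ) 1) :
    ∃ q : Ω → ℝ, @IsCondQuantile Ω mΩ P G Z q l := by
  
  obtain ⟨q, hq, h1, h2⟩ :=
    @exists_quantile_aux Ω Ω mΩ G P inferInstance Z hZ id (measurable_id'' hG) l hl.1 hl.2
  rw [MeasurableSpace.comap_id] at hq h1 h2
  exact ⟨q, hq, h1, h2⟩
end
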